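/- Let (T_β : β < κ) be an independent sequence of Suslin trees, i.e., every product of finitely many distinct members of the sequence (ordered coordinatewise by the reversed tree orders) has the countable chain condition. Let A ⊆ κ and let α ∈ κ with α ∉ A. Then the partial order (∏_{i∈A} T_i) × T_α, where ∏_{i∈A} T_i is the finite support product of the trees T_i for i ∈ A, has the countable chain condition. -/

import Mathlib

noncomputable section

/-- The first uncountable ordinal `ω₁`. -/
def omega1 : Ordinal.{0} := (Cardinal.aleph 1).ord

/-- A club (closed unbounded) subset of `ω₁`. -/
def IsClub' (C : Set Ordinal) : Prop :=
  C ⊆ Set.Iio omega1 ∧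
  (∀ β < omega1, ∃ γ ∈ C, β ≤ γ) ∧
  (∀ α < omega1, Order.IsSuccLimit α → (∀ β < α, ∃ γ ∈ C, β ≤ γ ∧ γ < α) → α ∈ C)

/-- A stationary subset of `ω₁`: one meeting every club. -/
def IsStationaryIn (S : Set Ordinal) : Prop :=
  S ⊆ Set.Iio omega1 ∧ ∀ C : Set Ordinal, IsClub' C → (S ∩ C).Nonempty

/-- The diamond principle `♦`. -/
def DiamondPrinciple : Prop :=
  ∃ a : Ordinal → Set Ordinal,
    (∀ α, α < omega1 → a α ⊆ Set.Iio α) ∧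
    ∀ A : Set Ordinal, A ⊆ Set.Iio omega1 →
      IsStationaryIn {α | α < omega1 ∧ A ∩ Set.Iio α = a α}

open Classical in
/-- The level of a node of a tree: the order type of its set of strict
predecessors (defaulting to `0` when that set is not well-ordered). -/
noncomputable def levelOf {β : Type} [Preorder β] (x : β) : Ordinal :=
  if h : IsWellOrder {y : β // y < x} (· < ·) then
    @Ordinal.type {y : β // y < x} (· < ·) h
  else 0

/-- A tree order: the strict predecessors of every node are well-ordered. -/
def IsTreeOrder (β : Type) [Preorder β] : Prop :=
  ∀ x : β, IsWellOrder {y : β // y < x} (· < ·)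

/-- The height of a tree: the supremum of the successors of the levels of its nodes. -/
noncomputable def heightOf (β : Type) [Preorder β] : Ordinal :=
  ⨆ x : β, (levelOf x + 1)

/-- A Suslin tree: a tree of height `ω₁` all of whose chains and antichains
(in the tree sense: sets of pairwise incomparable nodes) are countable. -/
def IsSuslinTree (β : Type) [PartialOrder β] : Prop :=
  IsTreeOrder β ∧ heightOf β = omega1 ∧
  (∀ C : Set β, IsChain (· ≤ ·) C → C.Countable) ∧
  (∀ A : Set β, (A.Pairwise fun x y => ¬ x ≤ y ∧ ¬ y ≤ x) → A.Countable)

/-- Compatibility (forcing sense): a common lower bound exists. -/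
def Compat {P : Type*} [Preorder P] (p q : P) : Prop := ∃ r, r ≤ p ∧ r ≤ q

/-- The countable chain condition: every set of pairwise incompatible elements is countable. -/
def CCC (P : Type*) [Preorder P] : Prop :=
  ∀ A : Set P, (A.Pairwise fun p q => ¬ Compat p q) → A.Countable

/-- Compatibility in the upward sense: a common upper bound exists. -/
def UpCompat {P : Type*} [Preorder P] (p q : P) : Prop := ∃ r, p ≤ r ∧ q ≤ r

/-- The countable chain condition with compatibility read as the existence of
common upper bounds. -/
def CCCUp (P : Type*) [Preorder P] : Prop :=
  ∀ A : Set P, (A.Pairwise fun p q => ¬ UpCompat p q) → A.Countable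

/-- The Knaster property. -/
def Knaster (P : Type*) [Preorder P] : Prop :=
  ∀ A : Set P, ¬ A.Countable → ∃ B ⊆ A, ¬ B.Countable ∧ B.Pairwise Compat

/-- A bundled partial order. -/
structure PoCarrier : Type 1 where
  carrier : Type
  po : PartialOrder carrier

attribute [instance] PoCarrier.po

/-- The finite support product of a family `(P i : i ∈ I)` of partial orders:
conditions are functions defined on a finite subset of `I` (represented as
finitely-supported `Option`-valued functions) with `p i ∈ P i` on the domain. -/
def FinSupportProd (I : Type*) (P : I → Type*) :=
  {f : ∀ i, Option (P i) // {i | f i ≠ none}.Finite}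

/-- `q ≤ p` iff `dom p ⊆ dom q` and `q i ≤ p i` for every `i ∈ dom p`. -/
instance {I : Type*} {P : I → Type*} [∀ i, PartialOrder (P i)] :
    PartialOrder (FinSupportProd I P) where
  le q p := ∀ i x, p.1 i = some x → ∃ y, q.1 i = some y ∧ y ≤ x
  le_refl p i x h := ⟨x, h, le_rfl⟩
  le_trans a b c hab hbc i x hcx := by
    obtain ⟨y, hby, hyx⟩ := hbc i x hcx
    obtain ⟨z, haz, hzy⟩ := hab i y hby
    exact ⟨z, haz, hzy.trans hyx⟩
  le_antisymm a b hab hba := by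
    apply Subtype.ext
    funext i
    cases hbi : b.1 i with
    | none =>
      cases hai : a.1 i with
      | none => rfl
      | some z =>
        obtain ⟨w, hbw, -⟩ := hba i z hai
        rw [hbi] at hbw; exact absurd hbw (by simp)
    | some x =>
      obtain ⟨y, hay, hyx⟩ := hab i x hbi
      obtain ⟨z, hbz, hzy⟩ := hba i y hay
      rw [hbi] at hbz
      obtain rfl : x = z := by injection hbz
      rw [hay, le_antisymm hyx hzy]

/-- Delta-system lemma for uncountable families of finite sets of bounded size. -/
lemma exists_delta_system {ι I : Type*} [DecidableEq I] :
    ∀ (n : ℕ) (f : ι → Finset I) (W : Set ι), ¬ W.Countable →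
      (∀ p ∈ W, (f p).card ≤ n) →
    ∃ r : Finset I, ∃ W' ⊆ W, ¬ W'.Countable ∧
      W'.Pairwise fun p q => f p ∩ f q ⊆ r := by
  intro n
  induction n with
  | zero =>
    intro f W hW hcard
    refine ⟨∅, W, Set.Subset.rfl, hW, fun p hp q hq _ => ?_⟩
    have : f p = ∅ := Finset.card_eq_zero.mp (Nat.le_zero.mp (hcard p hp))
    simp [this]
  | succ n ih =>
    intro f W hW hcard
    by_cases hx : ∃ x : I, ¬ Set.Countable {p ∈ W | x ∈ f p}
    · obtain ⟨x, hx⟩ := hx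
      obtain ⟨r, W', hsub, hunc, hroot⟩ := ih (fun p => (f p).erase x)
        {p ∈ W | x ∈ f p} hx (fun p hp => by
          have h1 := hcard p hp.1
          have h2 : x ∈ f p := hp.2
          have h3 : 0 < (f p).card := Finset.card_pos.mpr ⟨x, h2⟩
          rw [Finset.card_erase_of_mem h2]
          omega)
      refine ⟨insert x r, W', hsub.trans (Set.sep_subset _ _), hunc, ?_⟩
      intro p hp q hq hpq y hy
      rw [Finset.mem_inter] at hy
      by_cases hyx : y = x
      · simp [hyx]
      · refine Finset.mem_insert_of_mem (hroot hp hq hpq ?_)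
        simp only [Finset.mem_inter, Finset.mem_erase]
        exact ⟨⟨hyx, hy.1⟩, ⟨hyx, hy.2⟩⟩
    · push_neg at hx
      have hWne : W.Nonempty := by
        rcases W.eq_empty_or_nonempty with h | h
        · exact absurd (h ▸ Set.countable_empty) hW
        · exact h
      obtain ⟨p₀, hp₀⟩ := hWne
      set S : Set (Set ι) := {M | M ⊆ W ∧ M.Pairwise fun p q => f p ∩ f q = ∅} with hS
      obtain ⟨m, -, hmax⟩ := zorn_subset_nonempty S (fun c hcS hc _ => by
        refine ⟨⋃₀ c, ⟨Set.sUnion_subset fun s hs => (hcS hs).1, ?_⟩,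
          fun s hs => Set.subset_sUnion_of_mem hs⟩
        intro p hp q hq hpq
        obtain ⟨s, hs, hps⟩ := hp
        obtain ⟨t, ht, hqt⟩ := hq
        rcases hc.total hs ht with hst | hts
        · exact (hcS ht).2 (hst hps) hqt hpq
        · exact (hcS hs).2 hps (hts hqt) hpq) {p₀}
        ⟨Set.singleton_subset_iff.mpr hp₀, Set.pairwise_singleton _ _⟩
      by_cases hm : m.Countable
      · exfalso
        apply hW
        have hsub : W ⊆ m ∪ ⋃ q ∈ m, ⋃ x ∈ (f q : Set I), {p ∈ W | x ∈ f p} := by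
          intro w hw
          by_contra hwn
          rw [Set.mem_union, not_or] at hwn
          have hwm : w ∉ m := hwn.1
          have hdisj : ∀ q ∈ m, f w ∩ f q = ∅ := by
            intro q hq
            rw [Finset.eq_empty_iff_forall_notMem]
            intro x hxm
            rw [Finset.mem_inter] at hxm
            apply hwn.2
            exact Set.mem_biUnion hq (Set.mem_biUnion (by exact_mod_cast hxm.2)
              ⟨hw, hxm.1⟩)
          have hins : insert w m ∈ S := by
            refine ⟨Set.insert_subset hw hmax.1.1, ?_⟩
            rw [Set.pairwise_insert]
            refine ⟨hmax.1.2, fun q hq hne => ⟨hdisj q hq, ?_⟩⟩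
            rw [Finset.inter_comm]; exact hdisj q hq
          exact hwm (hmax.2 hins (Set.subset_insert _ _) (Set.mem_insert _ _))
        refine Set.Countable.mono hsub (hm.union ?_)
        exact Set.Countable.biUnion hm fun q _ =>
          Set.Countable.biUnion ((f q).countable_toSet) fun x _ => hx x
      · refine ⟨∅, m, hmax.1.1, hm, fun p hp q hq hpq => ?_⟩
        exact le_of_eq (hmax.1.2 hp hq hpq)

open Classical in
/-- The restriction of a condition in the finite-support product times `T α`
to the finite set of coordinates `e`. -/
noncomputable def restrictMap {κ : Ordinal} (T : Set.Iio κ → PoCarrier)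
    (hne : ∀ i, Nonempty (T i).carrier)
    (A : Set (Set.Iio κ)) (α : Set.Iio κ) (e : Finset (Set.Iio κ))
    (hmem : ∀ i : e, i.1 ≠ α → i.1 ∈ A)
    (p : FinSupportProd A (fun i => ((T i.1).carrier)ᵒᵈ) × ((T α).carrier)ᵒᵈ) :
    (i : e) → ((T i.1).carrier)ᵒᵈ :=
  fun i =>
    if h : i.1 = α then (h.symm ▸ p.2)
    else (p.1.1 ⟨i.1, hmem i h⟩).getD (hne i.1).some

lemma restrictMap_eval_alpha {κ : Ordinal} (T : Set.Iio κ → PoCarrier)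
    (hne : ∀ i, Nonempty (T i).carrier)
    (A : Set (Set.Iio κ)) (α : Set.Iio κ) (e : Finset (Set.Iio κ))
    (hmem : ∀ i : e, i.1 ≠ α → i.1 ∈ A) (hαe : α ∈ e)
    (p : FinSupportProd A (fun i => ((T i.1).carrier)ᵒᵈ) × ((T α).carrier)ᵒᵈ) :
    restrictMap T hne A α e hmem p ⟨α, hαe⟩ = p.2 := by
  simp [restrictMap]

lemma restrictMap_eval_coord {κ : Ordinal} (T : Set.Iio κ → PoCarrier)
    (hne : ∀ i, Nonempty (T i).carrier)
    (A : Set (Set.Iio κ)) (α : Set.Iio κ) (e : Finset (Set.Iio κ))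
    (hmem : ∀ i : e, i.1 ≠ α → i.1 ∈ A) (hα : α ∉ A)
    (p : FinSupportProd A (fun i => ((T i.1).carrier)ᵒᵈ) × ((T α).carrier)ᵒᵈ)
    (j : A) (hj : j.1 ∈ e) (x : ((T j.1).carrier)ᵒᵈ) (hx : p.1.1 j = some x) :
    restrictMap T hne A α e hmem p ⟨j.1, hj⟩ = x := by
  have hjα : ((⟨j.1, hj⟩ : e) : Set.Iio κ) ≠ α := fun h => hα (h ▸ j.2)
  rw [restrictMap, dif_neg hjα]
  show (p.1.1 j).getD ((hne j.1).some) = x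
  rw [hx]
  rfl

/-- Let `(T_β : β < κ)` be an independent sequence of Suslin
trees: every product of finitely many distinct members (with the reversed tree
orders, coordinatewise) has the countable chain condition.  If `A ⊆ κ` and
`α ∈ κ \ A`, then `(∏_{i ∈ A} T_i) × T_α` — the finite support product of the
trees indexed by `A`, times `T_α`, all with reversed tree orders — has the
countable chain condition. -/
theorem finSupportProd_times_unused_tree_ccc {κ : Ordinal}
    (T : Set.Iio κ → PoCarrier)
    (hS : ∀ i, IsSuslinTree (T i).carrier)
    (hind : ∀ e : Finset (Set.Iio κ), e.Nonempty →
      CCC ((i : e) → ((T i.1).carrier)ᵒᵈ))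
    (A : Set (Set.Iio κ)) (α : Set.Iio κ) (hα : α ∉ A) :
    CCC (FinSupportProd A (fun i => ((T i.1).carrier)ᵒᵈ) × ((T α).carrier)ᵒᵈ) := by
  classical
  intro B hB
  by_contra hBunc
  have hne : ∀ i, Nonempty (T i).carrier := by
    intro i
    by_contra h
    have hempty : IsEmpty (T i).carrier := not_nonempty_iff.mp h
    have h1 := (hS i).2.1
    rw [heightOf, ciSup_of_empty] at h1
    have h2 : omega1 ≠ 0 := by
      intro h0
      rw [omega1, ← Cardinal.ord_zero] at h0
      exact (Cardinal.aleph_pos 1).ne' (Cardinal.ord_injective h0)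
    exact h2 (h1.symm.trans (by simp))
  set supp : (FinSupportProd A (fun i => ((T i.1).carrier)ᵒᵈ) × ((T α).carrier)ᵒᵈ) → Finset A := fun p => p.1.2.toFinset with hsupp
  have hmemsupp : ∀ (p : (FinSupportProd A (fun i => ((T i.1).carrier)ᵒᵈ) × ((T α).carrier)ᵒᵈ)) (j : A), j ∈ supp p ↔ p.1.1 j ≠ none :=
    fun p j => Set.Finite.mem_toFinset _
  obtain ⟨n, hn⟩ : ∃ n, ¬ Set.Countable {p ∈ B | (supp p).card = n} := by
    by_contra h
    push_neg at h
    have hsub2 : B ⊆ ⋃ n, {p ∈ B | (supp p).card = n} :=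
      fun p hp => Set.mem_iUnion.mpr ⟨(supp p).card, hp, rfl⟩
    exact hBunc (Set.Countable.mono hsub2 (Set.countable_iUnion h))
  obtain ⟨r, W', hW'sub, hW'unc, hroot⟩ := exists_delta_system n supp _ hn
    (fun p hp => le_of_eq hp.2)
  have hW'B : W' ⊆ B := hW'sub.trans (Set.sep_subset _ _)
  set e : Finset (Set.Iio κ) := insert α (r.image Subtype.val) with he
  have hαe : α ∈ e := Finset.mem_insert_self _ _
  have hmem : ∀ i : e, i.1 ≠ α → i.1 ∈ A := by
    intro i hiα
    rcases Finset.mem_insert.mp i.2 with h | h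
    · exact absurd h hiα
    · obtain ⟨j, hj, hji⟩ := Finset.mem_image.mp h
      exact hji ▸ j.2
  have hrmem : ∀ j : A, j ∈ r → j.1 ∈ e := fun j hj =>
    Finset.mem_insert_of_mem (Finset.mem_image_of_mem _ hj)
  set ρ := restrictMap T hne A α e hmem with hρ
  -- evaluation lemmas
  have hρα : ∀ p : (FinSupportProd A (fun i => ((T i.1).carrier)ᵒᵈ) × ((T α).carrier)ᵒᵈ), ρ p ⟨α, hαe⟩ = p.2 := fun p =>
    restrictMap_eval_alpha T hne A α e hmem hαe p
  have hρcoord : ∀ (p : (FinSupportProd A (fun i => ((T i.1).carrier)ᵒᵈ) × ((T α).carrier)ᵒᵈ)) (j : A) (hj : j.1 ∈ e) (x : ((T j.1).carrier)ᵒᵈ),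
      p.1.1 j = some x → ρ p ⟨j.1, hj⟩ = x := fun p j hj x hx =>
    restrictMap_eval_coord T hne A α e hmem hα p j hj x hx
  have key : ∀ p ∈ W', ∀ q ∈ W', p ≠ q → ¬ Compat (ρ p) (ρ q) := by
    rintro p hp q hq hpq ⟨g, hgp, hgq⟩
    refine hB (hW'B hp) (hW'B hq) hpq ?_
    set h1fn : ∀ j : A, Option ((T j.1).carrier)ᵒᵈ := fun j =>
      if hjr : j ∈ r then some (g ⟨j.1, hrmem j hjr⟩)
      else (p.1.1 j).elim (q.1.1 j) some with hh1fn
    have hfin : {j : A | h1fn j ≠ none}.Finite := by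
      refine Set.Finite.subset ((r.finite_toSet.union p.1.2).union q.1.2) ?_
      intro j hj
      simp only [hh1fn] at hj
      by_cases hjr : j ∈ r
      · exact Or.inl (Or.inl hjr)
      · simp only [Set.mem_setOf_eq, dif_neg hjr] at hj
        cases hpj : p.1.1 j with
        | none => rw [hpj] at hj; exact Or.inr hj
        | some y => exact Or.inl (Or.inr (by simp [hpj]))
    refine ⟨⟨⟨h1fn, hfin⟩, g ⟨α, hαe⟩⟩, ⟨?_, ?_⟩, ⟨?_, ?_⟩⟩
    · -- first component ≤ p.1
      intro j x hx
      by_cases hjr : j ∈ r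
      · refine ⟨g ⟨j.1, hrmem j hjr⟩, by simp [hh1fn, dif_pos hjr], ?_⟩
        have := hgp ⟨j.1, hrmem j hjr⟩
        rwa [hρcoord p j (hrmem j hjr) x hx] at this
      · exact ⟨x, by simp [hh1fn, dif_neg hjr, hx], le_refl _⟩
    · -- second component ≤ p.2
      have := hgp ⟨α, hαe⟩
      rwa [hρα p] at this
    · -- first component ≤ q.1
      intro j x hx
      by_cases hjr : j ∈ r
      · refine ⟨g ⟨j.1, hrmem j hjr⟩, by simp [hh1fn, dif_pos hjr], ?_⟩
        have := hgq ⟨j.1, hrmem j hjr⟩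
        rwa [hρcoord q j (hrmem j hjr) x hx] at this
      · have hpj : p.1.1 j = none := by
          by_contra hpj
          refine hjr (hroot hp hq hpq ?_)
          rw [Finset.mem_inter, hmemsupp, hmemsupp]
          exact ⟨hpj, by simp [hx]⟩
        exact ⟨x, by simp [hh1fn, dif_neg hjr, hpj, hx], le_refl _⟩
    · -- second component ≤ q.2
      have := hgq ⟨α, hαe⟩
      rwa [hρα q] at this
  have hinj : Set.InjOn ρ W' := by
    intro p hp q hq hpqeq
    by_contra hne'
    exact key p hp q hq hne' ⟨ρ p, le_refl _, hpqeq ▸ le_refl _⟩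
  have himg : (ρ '' W').Pairwise fun a b => ¬ Compat a b := by
    rintro _ ⟨p, hp, rfl⟩ _ ⟨q, hq, rfl⟩ hne'
    exact key p hp q hq (fun h => hne' (h ▸ rfl))
  have hcnt := hind e ⟨α, hαe⟩ (ρ '' W') himg
  exact hW'unc (Set.countable_of_injective_of_countable_image hinj hcnt)


end
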